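/- The invertible elements of B₀ are dense in B₀ with respect to the norm ‖a‖ = ‖a‖_∞ + ‖a‖_ω, and the invertible selfadjoint (real-valued) elements are dense in the set of selfadjoint elements. -/

import Mathlib

open Filter Topology

/-- `B₀` membership: the sequence converges and `n (a n - λ(a))` converges. -/
def MemB0 (a : ℕ → ℂ) (la : ℂ) : Prop :=
  Tendsto a atTop (𝓝 la) ∧ ∃ w, Tendsto (fun n : ℕ => (n : ℂ) * (a n - la)) atTop (𝓝 w)

/-- The norm `‖a‖ = ‖a‖_∞ + ‖a‖_ω` on `B₀`, where `la = λ(a)`. -/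
noncomputable def nrm (a : ℕ → ℂ) (la : ℂ) : ℝ :=
  (⨆ n : ℕ, ‖a n‖) + ⨆ n : ℕ, (n : ℝ) * ‖a n - la‖

lemma exists_shift (a : ℕ → ℂ) (la : ℂ) (ε : ℝ) (hε : 0 < ε) :
    ∃ t : ℝ, 0 < t ∧ t < ε ∧ (∀ n, a n + t ≠ 0) ∧ la + t ≠ 0 := by
  have hS : (insert la (Set.range a)).Countable :=
    (Set.countable_range a).insert la
  have hinj : Function.Injective (fun x : ℝ => -(x : ℂ)) := by
    intro x y h
    simpa using h
  have hT : ((fun x : ℝ => -(x : ℂ)) ⁻¹' insert la (Set.range a)).Countable :=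
    hS.preimage hinj
  have hd : Dense ((fun x : ℝ => -(x : ℂ)) ⁻¹' insert la (Set.range a))ᶜ :=
    hT.dense_compl ℝ
  obtain ⟨t, ht1, ht2⟩ := hd.exists_mem_open isOpen_Ioo (Set.nonempty_Ioo.2 hε)
  refine ⟨t, ht2.1, ht2.2, ?_, ?_⟩
  · intro n h
    exact ht1 (Set.mem_insert_of_mem _ ⟨n, eq_neg_of_add_eq_zero_left h⟩)
  · intro h
    exact ht1 (Set.mem_insert_iff.2 (Or.inl (eq_neg_of_add_eq_zero_left h).symm))

lemma key (a : ℕ → ℂ) (la : ℂ) (h : MemB0 a la) (ε : ℝ) (hε : 0 < ε) :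
    ∃ (b : ℕ → ℂ) (lb : ℂ), MemB0 b lb ∧ (∀ n, (b n).im = (a n).im) ∧
      (∃ (c : ℕ → ℂ) (lc : ℂ), MemB0 c lc ∧ ∀ n, b n * c n = 1) ∧
      nrm (fun n => a n - b n) (la - lb) < ε := by
  obtain ⟨t, ht0, htε, hbn, hlb⟩ := exists_shift a la ε hε
  obtain ⟨ha1, w, ha2⟩ := h
  refine ⟨fun n => a n + t, la + t, ⟨ha1.add_const _, w, ?_⟩, fun n => by simp, ?_, ?_⟩
  · simpa using ha2
  · -- inverse
    refine ⟨fun n => (a n + t)⁻¹, (la + t)⁻¹, ⟨(ha1.add_const _).inv₀ hlb, ?_⟩,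
      fun n => mul_inv_cancel₀ (hbn n)⟩
    refine ⟨-w * ((la + t)⁻¹ * (la + t)⁻¹), ?_⟩
    have key : ∀ n : ℕ, (n : ℂ) * ((a n + t)⁻¹ - (la + t)⁻¹)
        = ((n : ℂ) * (a n + t - (la + t))) * (-((a n + t)⁻¹ * (la + t)⁻¹)) := by
      intro n
      field_simp [hbn n, hlb]
      ring
    have hinv : Tendsto (fun n : ℕ => -((a n + t)⁻¹ * (la + t)⁻¹)) atTop
        (𝓝 (-((la + t)⁻¹ * (la + t)⁻¹))) :=
      (((ha1.add_const _).inv₀ hlb).mul tendsto_const_nhds).neg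
    have ha2' : Tendsto (fun n : ℕ => (n : ℂ) * (a n + t - (la + t))) atTop (𝓝 w) := by
      simpa using ha2
    have := ha2'.mul hinv
    refine Tendsto.congr (fun n => (key n).symm) (by convert this using 2; ring)
  · -- norm estimate
    have e1 : (fun n => a n - (a n + (t : ℂ))) = fun _ : ℕ => -(t : ℂ) := by
      funext n; ring
    have e2 : la - (la + (t : ℂ)) = -(t : ℂ) := by ring
    rw [e1, e2]
    unfold nrm
    have h1 : (⨆ _ : ℕ, ‖(-(t : ℂ))‖) = t := by
      rw [ciSup_const]
      simp [abs_of_pos ht0]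
    have h2 : (⨆ n : ℕ, (n : ℝ) * ‖((-(t : ℂ)) - (-(t : ℂ)))‖) = 0 := by
      simp
    rw [h1, h2]
    linarith

theorem B0_invertibles_dense :
    (∀ (a : ℕ → ℂ) (la : ℂ), MemB0 a la → ∀ ε : ℝ, 0 < ε →
      ∃ (b : ℕ → ℂ) (lb : ℂ), MemB0 b lb ∧
        (∃ (c : ℕ → ℂ) (lc : ℂ), MemB0 c lc ∧ ∀ n, b n * c n = 1) ∧
        nrm (fun n => a n - b n) (la - lb) < ε) ∧
    (∀ (a : ℕ → ℂ) (la : ℂ), MemB0 a la → (∀ n, (a n).im = 0) → ∀ ε : ℝ, 0 < ε →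
      ∃ (b : ℕ → ℂ) (lb : ℂ), MemB0 b lb ∧ (∀ n, (b n).im = 0) ∧
        (∃ (c : ℕ → ℂ) (lc : ℂ), MemB0 c lc ∧ ∀ n, b n * c n = 1) ∧
        nrm (fun n => a n - b n) (la - lb) < ε) := by
  constructor
  · intro a la h ε hε
    obtain ⟨b, lb, hb, _, hc, hn⟩ := key a la h ε hε
    exact ⟨b, lb, hb, hc, hn⟩
  · intro a la h him ε hε
    obtain ⟨b, lb, hb, him', hc, hn⟩ := key a la h ε hε
    exact ⟨b, lb, hb, fun n => (him' n).trans (him n), hc, hn⟩
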